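/- The process that repeatedly takes the earliest overlapping pair (Y_{v1}, Y_{v2}) in a reduced list of words, replaces Y_{v1} = M·N, Y_{v2} = N·L by appending M, N, L and removing Y_{v1}, Y_{v2}, then removes empties and duplicates, terminates after finitely many steps in a list with no overlapping pair. -/

import Mathlib

/-- Two words overlap if `X = M·N` and `Y = N·L` where `N` and `M·L` are non-empty. -/
def Overlap {α : Type*} (X Y : List α) : Prop :=
  ∃ M N L : List α, X = M ++ N ∧ Y = N ++ L ∧ N ≠ [] ∧ M ++ L ≠ []

/-- One step of the division algorithm Δ: pick an overlapping pair `Y₁ = M·N`, `Y₂ = N·L`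
from the list, remove the pair, append `M, N, L`, remove empty words and duplicates. -/
def DeltaStep {α : Type*} [DecidableEq α] (l l' : List (List α)) : Prop :=
  ∃ Y1 Y2 M N L : List α, Y1 ∈ l ∧ Y2 ∈ l ∧
    Y1 = M ++ N ∧ Y2 = N ++ L ∧ N ≠ [] ∧ M ++ L ≠ [] ∧
    l' = ((((l.erase Y1).erase Y2) ++ [M, N, L]).filter (fun w => !w.isEmpty)).dedup

/-- A reduced list: all words non-empty and pairwise distinct. -/
def ReducedList {α : Type*} (l : List (List α)) : Prop :=
  (∀ w ∈ l, w ≠ []) ∧ l.Nodup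

/-- weight of a list of words -/
def wt {α : Type*} (l : List (List α)) : ℕ := (l.map (fun w => 3 ^ w.length)).sum

lemma wt_perm {α : Type*} {l t : List (List α)} (h : l.Perm t) : wt l = wt t :=
  (h.map _).sum_eq

lemma wt_le_of_subset {α : Type*} [DecidableEq α] {l t : List (List α)}
    (hnd : l.Nodup) (hsub : l ⊆ t) : wt l ≤ wt t := by
  have hsp : l.Subperm t := List.subperm_of_subset hnd hsub
  have h1 : (l : Multiset (List α)) ≤ (t : Multiset (List α)) := Multiset.coe_le.mpr hsp
  have h2 := Multiset.map_le_map (f := fun w => 3 ^ w.length) h1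
  obtain ⟨u, hu⟩ := Multiset.le_iff_exists_add.mp h2
  have : wt t = wt l + u.sum := by
    have := congrArg Multiset.sum hu
    simpa [wt] using this
  omega

lemma perm_cons_erase' {β : Type*} [BEq β] [LawfulBEq β] {a : β} {l : List β} (h : a ∈ l) :
    l.Perm (a :: l.erase a) := by
  induction l with
  | nil => cases h
  | cons b t ih =>
    rcases eq_or_ne b a with rfl | hne
    · rw [List.erase_cons_head]
    · have ht : a ∈ t := (List.mem_cons.mp h).resolve_left fun e => hne e.symm
      rw [List.erase_cons_tail (not_beq_of_ne hne)]
      exact ((ih ht).cons b).trans (List.Perm.swap _ _ _)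

lemma wt_cons_erase {α : Type*} [DecidableEq α] {x : List α} {l : List (List α)} (hx : x ∈ l) :
    wt l = 3 ^ x.length + wt (l.erase x) := by
  have := wt_perm (perm_cons_erase' hx)
  simpa [wt] using this

lemma pow3_pos (k : ℕ) : 0 < 3 ^ k := Nat.pow_pos (by norm_num)

lemma three_le_pow3 {k : ℕ} (hk : 1 ≤ k) : 3 ≤ 3 ^ k := by
  calc 3 = 3 ^ 1 := by norm_num
  _ ≤ 3 ^ k := Nat.pow_le_pow_right (by norm_num) hk

lemma nine_le_pow3 {k : ℕ} (hk : 2 ≤ k) : 9 ≤ 3 ^ k := by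
  calc 9 = 3 ^ 2 := by norm_num
  _ ≤ 3 ^ k := Nat.pow_le_pow_right (by norm_num) hk

lemma key_ineq_distinct (a b c : ℕ) (hb : 1 ≤ b) (hac : 1 ≤ a + c) :
    3 ^ a + 3 ^ b + 3 ^ c < 3 ^ (a + b) + 3 ^ (b + c) := by
  have hy : 3 ≤ 3 ^ b := three_le_pow3 hb
  have hS : 4 ≤ 3 ^ a + 3 ^ c := by
    rcases Nat.lt_or_ge a 1 with h | h
    · interval_cases a
      · have : 1 ≤ c := by omega
        have := three_le_pow3 this
        omega
    · have := three_le_pow3 h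
      have := pow3_pos c
      omega
  have e1 : 3 ^ (a + b) + 3 ^ (b + c) = 3 ^ b * (3 ^ a + 3 ^ c) := by
    rw [pow_add, pow_add]; ring
  rw [e1]
  set S := 3 ^ a + 3 ^ c with hSdef
  set y := 3 ^ b with hydef
  have h1 : 3 * S ≤ y * S := Nat.mul_le_mul_right S hy
  have h2 : y * 4 ≤ y * S := Nat.mul_le_mul_left y hS
  have : 3 ^ a + 3 ^ b + 3 ^ c = S + y := by omega
  omega

lemma key_ineq_self (a b : ℕ) (ha : 1 ≤ a) (hb : 1 ≤ b) (h : 2 ≤ a ∨ 2 ≤ b) :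
    3 ^ a + 3 ^ b + 3 ^ a < 3 ^ (a + b) := by
  have hx : 3 ≤ 3 ^ a := three_le_pow3 ha
  have hy : 3 ≤ 3 ^ b := three_le_pow3 hb
  have e1 : 3 ^ (a + b) = 3 ^ a * 3 ^ b := pow_add 3 a b
  rw [e1]
  set x := 3 ^ a
  set y := 3 ^ b
  rcases h with h | h
  · have hx9 : 9 ≤ x := nine_le_pow3 h
    have h1 : 9 * y ≤ x * y := Nat.mul_le_mul_right y hx9
    have h2 : x * 3 ≤ x * y := Nat.mul_le_mul_left x hy
    omega
  · have hy9 : 9 ≤ y := nine_le_pow3 h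
    have h1 : x * 9 ≤ x * y := Nat.mul_le_mul_left x hy9
    have h2 : 3 * y ≤ x * y := Nat.mul_le_mul_right y hx
    omega

lemma main_aux {α : Type*} [DecidableEq α] :
    ∀ (n : ℕ) (l : List (List α)), wt l ≤ n → ReducedList l →
      ∃ V : List (List α), Relation.ReflTransGen DeltaStep l V ∧
        ∀ x ∈ V, ∀ y ∈ V, ¬ Overlap x y := by
  intro n
  induction n with
  | zero =>
    intro l hl _
    refine ⟨l, Relation.ReflTransGen.refl, ?_⟩
    intro x hx y hy _
    have h0 : wt l = 0 := Nat.le_zero.mp hl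
    have h1 : (3 : ℕ) ^ x.length = 0 :=
      (List.sum_eq_zero_iff).mp h0 (3 ^ x.length) (List.mem_map_of_mem (f := fun w => 3 ^ w.length) hx)
    have h2 := pow3_pos x.length
    omega
  | succ n ih =>
    intro l hl hred
    by_cases h : ∃ x ∈ l, ∃ y ∈ l, Overlap x y
    · obtain ⟨x, hx, y, hy, M, N, L, hxMN, hyNL, hN, hML⟩ := h
      set l' := ((((l.erase x).erase y) ++ [M, N, L]).filter (fun w => !w.isEmpty)).dedup
        with hl'def
      have hstep : DeltaStep l l' := ⟨x, y, M, N, L, hx, hy, hxMN, hyNL, hN, hML, rfl⟩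
      have hred' : ReducedList l' := by
        constructor
        · intro w hw
          have hw2 : w ∈ (((l.erase x).erase y) ++ [M, N, L]).filter (fun w => !w.isEmpty) :=
            List.dedup_subset _ hw
          have := List.of_mem_filter hw2
          simpa using this
        · exact List.nodup_dedup _
      -- the weight decreases
      have hNlen : 1 ≤ N.length := List.length_pos_iff.mpr hN
      have hto : wt l' < wt l := by
        have hsub : l' ⊆ ((l.erase x).erase y) ++ [M, N, L] := fun w hw =>
          (List.mem_filter.mp (List.dedup_subset _ hw)).1
        have hbound : wt l' ≤ wt (((l.erase x).erase y) ++ [M, N, L]) :=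
          wt_le_of_subset (List.nodup_dedup _) hsub
        have happ : wt (((l.erase x).erase y) ++ [M, N, L]) =
            wt ((l.erase x).erase y) + (3 ^ M.length + 3 ^ N.length + 3 ^ L.length) := by
          simp [wt]; ring
        by_cases hxy : x = y
        · -- self overlap
          subst hxy
          have herase2 : (l.erase x).erase x = l.erase x :=
            List.erase_of_not_mem (hred.2.not_mem_erase)
          have hwl : wt l = 3 ^ x.length + wt (l.erase x) := wt_cons_erase hx
          have hlen : M.length + N.length = N.length + L.length := by
            have h1 := congrArg List.length hxMN
            have h2 := congrArg List.length hyNL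
            simp at h1 h2
            omega
          have hMLlen : M.length = L.length := by omega
          have hMne : M ≠ [] := by
            intro hM0
            apply hML
            have : L.length = 0 := by simp [hM0] at hMLlen; omega
            simp [hM0, List.length_eq_zero_iff.mp this]
          have hMlen : 1 ≤ M.length := List.length_pos_iff.mpr hMne
          by_cases hone : M.length = 1 ∧ N.length = 1
          · -- then M = N = L
            obtain ⟨m, hm⟩ := List.length_eq_one_iff.mp hone.1
            obtain ⟨nn, hn⟩ := List.length_eq_one_iff.mp hone.2
            obtain ⟨ll, hll⟩ := List.length_eq_one_iff.mp (by omega : L.length = 1)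
            have hx2 : x = [m, nn] := by simp [hxMN, hm, hn]
            have : ([m, nn] : List α) = [nn, ll] := by
              rw [← hx2, hyNL, hn, hll]; rfl
            have hmn : m = nn ∧ nn = ll := by
              simpa using this
            have hMN : M = N := by rw [hm, hn, hmn.1]
            have hLN : L = N := by rw [hll, hn, hmn.2]
            -- l' ⊆ (l.erase x) ++ [N]
            have hsub2 : l' ⊆ ((l.erase x).erase x) ++ [N] := by
              intro w hw
              have := hsub hw
              rw [hMN, hLN] at this
              simp at this ⊢
              tauto
            rw [herase2] at hsub2
            have hb2 : wt l' ≤ wt ((l.erase x) ++ [N]) :=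
              wt_le_of_subset (List.nodup_dedup _) hsub2
            have : wt ((l.erase x) ++ [N]) = wt (l.erase x) + 3 ^ N.length := by
              simp [wt]
            have hxlen : x.length = 2 := by
              rw [hxMN]; simp; omega
            rw [hwl, hxlen]
            have : 3 ^ N.length = 3 := by rw [hone.2]; norm_num
            omega
          · have hkey : 3 ^ M.length + 3 ^ N.length + 3 ^ L.length < 3 ^ x.length := by
              have hxlen : x.length = M.length + N.length := by
                rw [hxMN]; simp
              rw [hxlen, ← hMLlen]
              exact key_ineq_self _ _ hMlen hNlen (by omega)
            rw [herase2] at hbound happ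
            omega
        · -- distinct
          have hyx : y ∈ l.erase x := (List.mem_erase_of_ne (Ne.symm hxy)).mpr hy
          have hwl : wt l = 3 ^ x.length + (3 ^ y.length + wt ((l.erase x).erase y)) := by
            rw [wt_cons_erase hx, wt_cons_erase hyx]
          have hkey : 3 ^ M.length + 3 ^ N.length + 3 ^ L.length <
              3 ^ x.length + 3 ^ y.length := by
            have hxlen : x.length = M.length + N.length := by rw [hxMN]; simp
            have hylen : y.length = N.length + L.length := by rw [hyNL]; simp
            rw [hxlen, hylen]
            have hac : 1 ≤ M.length + L.length := by
              rcases Nat.eq_zero_or_pos (M.length + L.length) with h0 | h0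
              · exfalso
                apply hML
                have : M = [] ∧ L = [] := by
                  constructor <;> [skip; skip] <;>
                    exact List.length_eq_zero_iff.mp (by omega)
                simp [this.1, this.2]
              · exact h0
            exact key_ineq_distinct _ _ _ hNlen hac
          omega
      obtain ⟨V, hV1, hV2⟩ := ih l' (by omega) hred'
      exact ⟨V, Relation.ReflTransGen.head hstep hV1, hV2⟩
    · refine ⟨l, Relation.ReflTransGen.refl, ?_⟩
      intro x hx y hy hov
      exact h ⟨x, hx, y, hy, hov⟩

/-- Makanin, Lemma 2: the division algorithm Δ, started on any reduced list of words,
terminates after finitely many steps in a list containing no overlapping pair. -/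
theorem stmt_3 {α : Type*} [DecidableEq α] (Y : List (List α)) (hY : ReducedList Y) :
    ∃ V : List (List α), Relation.ReflTransGen DeltaStep Y V ∧
      ∀ x ∈ V, ∀ y ∈ V, ¬ Overlap x y := by
  exact main_aux (wt Y) Y le_rfl hY
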